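/- For every i with 1 ≤ i ≤ d−1 and all X, Z ∈ 𝔤, one has trace(⁅X,E_i⁆·Zᵀ) + trace(⁅X,Z⁆·E_iᵀ) + trace(⁅E_i,Z⁆·Xᵀ) = 0. -/

import Mathlib

open Matrix

lemma trace_fromBlocks' {n m : Type*} [Fintype n] [Fintype m] [DecidableEq n] [DecidableEq m]
    (A : Matrix n n ℝ) (B : Matrix n m ℝ) (C : Matrix m n ℝ) (D : Matrix m m ℝ) :
    Matrix.trace (fromBlocks A B C D) = Matrix.trace A + Matrix.trace D := by
  simp [Matrix.trace, Fintype.sum_sum_type, fromBlocks]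

/-- The Koszul-formula identity `⟨⁅X,E_i⁆,Z⟩ + ⟨⁅X,Z⁆,E_i⟩ + ⟨⁅E_i,Z⁆,X⟩ = 0` (with the
inner product `⟨X,Y⟩ = trace (X Yᵀ)`) holds for every `i = 1, …, d-1` and all `X, Z ∈ 𝔤`;
i.e. `E₁, …, E_{d-1}` are transvections at the identity. -/
theorem stmt13 (d : ℕ) (hd : 3 ≤ d) (a : ℝ) (ha : a ≠ 0)
    (M' : Matrix (Fin (d - 1)) (Fin (d - 1)) ℝ)
    (hM' : ∀ i j : Fin (d - 1), M' i j = if i < j then 1 else if j < i then -1 else 0)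
    (A : Matrix (Fin (d - 1) ⊕ Unit) (Fin (d - 1) ⊕ Unit) ℝ)
    (hA : A = fromBlocks (a • M')
      (a • Matrix.replicateCol Unit (Pi.single (⟨0, by omega⟩ : Fin (d - 1)) 1))
      (-(a • Matrix.replicateRow Unit (Pi.single (⟨0, by omega⟩ : Fin (d - 1)) 1)))
      (a • (1 : Matrix Unit Unit ℝ)))
    (E : (Fin (d - 1) ⊕ Unit) →
      Matrix ((Fin (d - 1) ⊕ Unit) ⊕ Unit) ((Fin (d - 1) ⊕ Unit) ⊕ Unit) ℝ)
    (hE : ∀ i, E i = fromBlocks 0 (Matrix.replicateCol Unit (Pi.single i 1)) 0 0)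
    (Abig : Matrix ((Fin (d - 1) ⊕ Unit) ⊕ Unit) ((Fin (d - 1) ⊕ Unit) ⊕ Unit) ℝ)
    (hAbig : Abig = fromBlocks A 0 0 0)
    (𝔤 : Submodule ℝ (Matrix ((Fin (d - 1) ⊕ Unit) ⊕ Unit) ((Fin (d - 1) ⊕ Unit) ⊕ Unit) ℝ))
    (h𝔤 : 𝔤 = Submodule.span ℝ (Set.range E ∪ {Abig})) :
    ∀ i : Fin (d - 1), ∀ X ∈ 𝔤, ∀ Z ∈ 𝔤,
      Matrix.trace (⁅X, E (Sum.inl i)⁆ * Zᵀ) +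
      Matrix.trace (⁅X, Z⁆ * (E (Sum.inl i))ᵀ) +
      Matrix.trace (⁅E (Sum.inl i), Z⁆ * Xᵀ) = 0 := by
  intro i X hX Z hZ
  rw [h𝔤] at hX hZ
  -- basic multiplication facts
  have hEE : ∀ j k, E j * E k = 0 := by
    intro j k; simp [hE, fromBlocks_multiply]
  have hEA : ∀ j, E j * Abig = 0 := by
    intro j; simp [hE, hAbig, fromBlocks_multiply]
  have hAE : ∀ j, Abig * E j =
      fromBlocks 0 (A * Matrix.replicateCol Unit (Pi.single j (1 : ℝ))) 0 0 := by
    intro j; simp [hE, hAbig, fromBlocks_multiply]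
  -- skewness of A in the relevant entries
  have hskew : ∀ (j : Fin (d - 1) ⊕ Unit),
      A (Sum.inl i) j + A j (Sum.inl i) = 0 := by
    intro j
    rcases j with j | j
    · subst hA
      simp only [fromBlocks_apply₁₁, Matrix.smul_apply, hM', smul_eq_mul]
      rcases lt_trichotomy i j with h | rfl | h
      · simp only [if_pos h, if_neg (lt_asymm h)]; ring
      · simp
      · simp only [if_pos h, if_neg (lt_asymm h)]; ring
    · subst hA
      simp [fromBlocks_apply₁₂, fromBlocks_apply₂₁]
  -- trace computations
  have htrEE : ∀ j k : Fin (d - 1) ⊕ Unit,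
      Matrix.trace ((Abig * E j) * (E k)ᵀ) = A k j := by
    intro j k
    rw [hAE, hE, fromBlocks_transpose, fromBlocks_multiply]
    simp [trace_fromBlocks', Matrix.trace, Matrix.mul_apply, Pi.single_apply,
      Finset.sum_ite_eq', mul_comm]
  have htrA0 : ∀ j, Matrix.trace ((Abig * E j) * Abigᵀ) = 0 := by
    intro j
    rw [hAE, hAbig, fromBlocks_transpose, fromBlocks_multiply]
    simp [trace_fromBlocks']
  -- main induction
  induction hX, hZ using Submodule.span_induction₂ with
  | mem_mem X Z hX hZ =>
    have key : ∀ (P Q : Matrix ((Fin (d-1) ⊕ Unit) ⊕ Unit) ((Fin (d-1) ⊕ Unit) ⊕ Unit) ℝ),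
        (P ∈ Set.range E ∪ {Abig}) → (Q ∈ Set.range E ∪ {Abig}) →
        Matrix.trace (⁅P, E (Sum.inl i)⁆ * Qᵀ) +
        Matrix.trace (⁅P, Q⁆ * (E (Sum.inl i))ᵀ) +
        Matrix.trace (⁅E (Sum.inl i), Q⁆ * Pᵀ) = 0 := by
      rintro P Q (⟨j, rfl⟩ | rfl) (⟨k, rfl⟩ | rfl)
      · simp [Ring.lie_def, hEE]
      · simp only [Ring.lie_def, hEE, hEA, zero_sub, sub_zero, sub_self, zero_mul,
          Matrix.trace_zero, neg_mul, Matrix.trace_neg, zero_add]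
        rw [htrEE j (Sum.inl i), htrEE (Sum.inl i) j]
        linarith [hskew j]
      · simp only [Ring.lie_def, hEE, hEA, sub_zero, sub_self, zero_mul,
          Matrix.trace_zero, add_zero]
        rw [htrEE (Sum.inl i) k, htrEE k (Sum.inl i)]
        linarith [hskew k]
      · simp [Ring.lie_def, hEA, htrA0]
    exact key X Z hX hZ
  | zero_left Z hZ => simp [Ring.lie_def]
  | zero_right X hX => simp [Ring.lie_def]
  | add_left X Y Z hX hY hZ h1 h2 =>
    simp only [Ring.lie_def, Matrix.sub_mul, Matrix.mul_sub, Matrix.trace_sub, Matrix.add_mul, Matrix.trace_add, transpose_add,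
      Matrix.mul_add] at *
    linarith
  | add_right X Y Z hX hY hZ h1 h2 =>
    simp only [Ring.lie_def, Matrix.sub_mul, Matrix.mul_sub, Matrix.trace_sub, Matrix.add_mul, Matrix.trace_add, transpose_add,
      Matrix.mul_add] at *
    linarith
  | smul_left r X Z hX hZ h =>
    simp only [Ring.lie_def, Matrix.sub_mul, Matrix.mul_sub, Matrix.trace_sub, Matrix.smul_mul, Matrix.mul_smul, Matrix.trace_smul,
      transpose_smul, smul_eq_mul] at *
    linear_combination r * h
  | smul_right r X Z hX hZ h =>
    simp only [Ring.lie_def, Matrix.sub_mul, Matrix.mul_sub, Matrix.trace_sub, Matrix.smul_mul, Matrix.mul_smul, Matrix.trace_smul,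
      transpose_smul, smul_eq_mul] at *
    linear_combination r * h
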